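/- For the T92+cpg rates: let v > 0, w ≥ 0, r ≥ 0, θ ∈ [0,1], set v_Y = v, v_R = v (so μ(Y) = μ(R) = 1/2 by the stationarity formulas), and suppose p_a, p_t, p_c, p_g solve the stationarity system with w_a = w_t = (1−θ)w, v_a = v_t = (1−θ)v, w_c = w_g = θw, v_c = v_g = θv, and r_Y = −r_R = r·q for some q ∈ [0,1]. Then p_a = p_t = (1−θ)/2 + r·q/(v+w) and p_c = p_g = θ/2 − r·q/(v+w). -/
import Mathlib

/-- One-site marginals for the T92+cpg model: with the T92+cpg specialization of the
RN+YpR rates (`w_a = w_t = (1−θ)w`, `v_a = v_t = (1−θ)v`, `w_c = w_g = θw`,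
`v_c = v_g = θv`, `r_Y = −r_R = r·q`), the stationarity system gives
`p_a = p_t = (1−θ)/2 + r·q/(v+w)` and `p_c = p_g = θ/2 − r·q/(v+w)`. -/
theorem stmt16 (pa pg pc pt v w r θ q : ℝ)
    (hv : 0 < v) (hw : 0 ≤ w) (hr : 0 ≤ r)
    (hθ0 : 0 ≤ θ) (hθ1 : θ ≤ 1) (hq0 : 0 ≤ q) (hq1 : q ≤ 1)
    (e1 : -(((1 - θ) * v) + (θ * v) + (θ * w)) * pa + ((1 - θ) * w) * pg
        + ((1 - θ) * v) * (pc + pt) = -(r * q))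
    (e2 : (θ * w) * pa - (((1 - θ) * v) + (θ * v) + ((1 - θ) * w)) * pg
        + (θ * v) * (pc + pt) = r * q)
    (e3 : -(((1 - θ) * v) + (θ * v) + ((1 - θ) * w)) * pc + (θ * w) * pt
        + (θ * v) * (pa + pg) = r * q)
    (e4 : ((1 - θ) * w) * pc - (((1 - θ) * v) + (θ * v) + (θ * w)) * pt
        + ((1 - θ) * v) * (pa + pg) = -(r * q))
    (e5 : pa + pg + pc + pt = 1) :
    pa = (1 - θ) / 2 + r * q / (v + w) ∧ pt = (1 - θ) / 2 + r * q / (v + w) ∧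
    pc = θ / 2 - r * q / (v + w) ∧ pg = θ / 2 - r * q / (v + w) := by
  have hvw : v + w > 0 := by linarith
  have hvw' : v + w ≠ 0 := ne_of_gt hvw
  have hv' : (v : ℝ) ≠ 0 := ne_of_gt hv
  have key1 : 2 * v * (v + w) * (pt - pa) = 0 := by
    linear_combination ((1 + θ) * v + (1 - θ) * w) * e1 - ((1 + θ) * v + (1 - θ) * w) * e4
      - ((1 - θ) * (w - v)) * e3 + ((1 - θ) * (w - v)) * e2
  have key2 : 2 * v * (v + w) * (pg - pc) = 0 := by
    linear_combination (((2 - θ) * v + θ * w)) * e3 - (((2 - θ) * v + θ * w)) * e2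
      - (θ * (w - v)) * e1 + (θ * (w - v)) * e4
  have hta : pt = pa := by
    have := mul_eq_zero.mp key1
    rcases this with h | h
    · exact absurd h (by positivity)
    · linarith
  have hgc : pg = pc := by
    have := mul_eq_zero.mp key2
    rcases this with h | h
    · exact absurd h (by positivity)
    · linarith
  have hsum : (v + w) * (pa + pt) = (1 - θ) * (v + w) + 2 * (r * q) := by
    linear_combination (-1 : ℝ) * e1 - e4 + ((1 - θ) * (v + w)) * e5
  have hpa : pa = (1 - θ) / 2 + r * q / (v + w) := by
    field_simp
    rw [hta] at hsum
    linarith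
  have hpc : pc = θ / 2 - r * q / (v + w) := by
    field_simp
    rw [hta, hgc] at e5
    rw [hta] at hsum
    nlinarith [hsum, e5]
  exact ⟨hpa, hta.trans hpa, hpc, hgc.trans hpc⟩
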